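/- Let A be an n×n matrix over a field such that for some pair u ≠ v: A_{u,w} = A_{v,w} for all w ∉ {u,v}. Let B be the row vector with B_u = A_{u,u}, B_v = A_{v,v}, and B_w = A_{u,w} for w ∉ {u,v}. Then for every index k ≠ v, the k-th entry of B·adj(A) equals (A_{u,u} − A_{v,u})·(−1)^{k+u}·det(A^{k;u}), and for every k ≠ u it equals (A_{v,v} − A_{u,v})·(−1)^{k+v}·det(A^{k;v}). -/

import Mathlib

/-- Factorisation of linear combinations of minors: with rows `u ≠ v` of `A`
agreeing outside columns `u, v` and `B` the cofactor-coefficient vector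
(`B u = A u u`, `B v = A v v`, `B w = A u w` otherwise), for `k ≠ v` the `k`-th
entry of `B·adj(A)` is `(A u u − A v u)(−1)^{k+u} det A^{k;u}`, and for `k ≠ u`
it is `(A v v − A u v)(−1)^{k+v} det A^{k;v}`. -/
theorem vecMul_adjugate_factorisation {K : Type*} [Field K] {n : ℕ}
    (A : Matrix (Fin (n + 1)) (Fin (n + 1)) K) (u v : Fin (n + 1)) (huv : u ≠ v)
    (hrow : ∀ w, w ≠ u → w ≠ v → A u w = A v w)
    (B : Fin (n + 1) → K) (hBu : B u = A u u) (hBv : B v = A v v)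
    (hBw : ∀ w, w ≠ u → w ≠ v → B w = A u w) :
    (∀ k, k ≠ v → Matrix.vecMul B A.adjugate k
      = (A u u - A v u) * (-1 : K) ^ ((k : ℕ) + (u : ℕ)) *
        (A.submatrix k.succAbove u.succAbove).det) ∧
    (∀ k, k ≠ u → Matrix.vecMul B A.adjugate k
      = (A v v - A u v) * (-1 : K) ^ ((k : ℕ) + (v : ℕ)) *
        (A.submatrix k.succAbove v.succAbove).det) := by
  have hrowv : ∀ i k, i ≠ k →
      Matrix.vecMul (A i) A.adjugate k = 0 := by
    intro i k hik
    have h : Matrix.vecMul (A i) A.adjugate k = (A * A.adjugate) i k := by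
      simp [Matrix.mul_apply, Matrix.vecMul, dotProduct]
    rw [h, Matrix.mul_adjugate]
    simp [Matrix.one_apply, hik]
  constructor
  · intro k hkv
    have hB : B = A v + Pi.single u (A u u - A v u) := by
      funext w
      by_cases hwu : w = u
      · subst hwu
        simp [hBu, huv.symm]
      · by_cases hwv : w = v
        · subst hwv; simp [hBv, Ne.symm hwu, hwu]
        · simp [hBw w hwu hwv, hrow w hwu hwv, Pi.single_eq_of_ne hwu]
    rw [hB, Matrix.add_vecMul]
    have h1 := hrowv v k (Ne.symm hkv)
    simp only [Pi.add_apply, h1, Matrix.single_vecMul, zero_add]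
    rw [Pi.smul_apply, Matrix.row_apply, smul_eq_mul]
    rw [Matrix.adjugate_fin_succ_eq_det_submatrix]
    ring
  · intro k hku
    have hB : B = A u + Pi.single v (A v v - A u v) := by
      funext w
      by_cases hwv : w = v
      · subst hwv
        simp [hBv, huv]
      · by_cases hwu : w = u
        · subst hwu; simp [hBu, Ne.symm hwv, hwv]
        · simp [hBw w hwu hwv, Pi.single_eq_of_ne hwv]
    rw [hB, Matrix.add_vecMul]
    have h1 := hrowv u k (Ne.symm hku)
    simp only [Pi.add_apply, h1, Matrix.single_vecMul, zero_add]
    rw [Pi.smul_apply, Matrix.row_apply, smul_eq_mul]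
    rw [Matrix.adjugate_fin_succ_eq_det_submatrix]
    ring
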